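/- arXiv:2005.01825 — 2 statements merged into one kernel-verified Lean document; each statement's English description precedes it below -/
import Mathlib

section
/- Let H be a real R×R doubly hyperdominant matrix with zero excess. Then there exist k ≤ R² − 2R + 1 nonnegative scalars λ_1, …, λ_k and R×R permutation matrices P_1, …, P_k such that H = Σ_{i=1}^k λ_i (I_R − P_i). -/
open Matrix

/-- A real square matrix is doubly hyperdominant if its off-diagonal entries are
nonpositive and all row and column sums are nonnegative. -/
def IsDoublyHyperdominant {R : ℕ} (H : Matrix (Fin R) (Fin R) ℝ) : Prop :=
  (∀ i j, i ≠ j → H i j ≤ 0) ∧ (∀ i, 0 ≤ ∑ j, H i j) ∧ (∀ j, 0 ≤ ∑ i, H i j)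

/-- Doubly hyperdominant with zero excess: in addition all row and column sums vanish. -/
def IsDoublyHyperdominantZeroExcess {R : ℕ} (H : Matrix (Fin R) (Fin R) ℝ) : Prop :=
  IsDoublyHyperdominant H ∧ (∀ i, ∑ j, H i j = 0) ∧ (∀ j, ∑ i, H i j = 0)

/-- A permutation matrix: a square 0–1 matrix with exactly one 1 in each row and column. -/
def IsPermutationMatrix {R : ℕ} (P : Matrix (Fin R) (Fin R) ℝ) : Prop :=
  (∀ i j, P i j = 0 ∨ P i j = 1) ∧ (∀ i, ∑ j, P i j = 1) ∧ (∀ j, ∑ i, P i j = 1)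

/-- Conic Carathéodory reduction: a nonnegative combination over a finite set can be
rewritten as a nonnegative combination over a subset on which the vectors are
linearly independent. -/
lemma cone_caratheodory {E ι : Type*} [AddCommGroup E] [Module ℝ E] [DecidableEq ι]
    (v : ι → E) (s : Finset ι) :
    ∀ l : ι → ℝ, (∀ i ∈ s, 0 ≤ l i) →
      ∃ t : Finset ι, t ⊆ s ∧ ∃ m : ι → ℝ, (∀ i ∈ t, 0 ≤ m i) ∧
        (∑ i ∈ t, m i • v i = ∑ i ∈ s, l i • v i) ∧
        LinearIndependent ℝ (fun i : t => v (i : ι)) := by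
  induction s using Finset.strongInductionOn with
  | _ s ih =>
    intro l hl
    by_cases hind : LinearIndependent ℝ (fun i : s => v (i : ι))
    · exact ⟨s, Finset.Subset.refl s, l, hl, rfl, hind⟩
    obtain ⟨g, hgsum, i₀, hgi₀⟩ := Fintype.not_linearIndependent_iff.mp hind
    -- extend g to a function on ι
    have key : ∀ c : ι → ℝ, (∑ i ∈ s, c i • v i = 0) → ∀ j₀ ∈ s, 0 < c j₀ →
        ∃ t : Finset ι, t ⊆ s ∧ ∃ m : ι → ℝ, (∀ i ∈ t, 0 ≤ m i) ∧
          (∑ i ∈ t, m i • v i = ∑ i ∈ s, l i • v i) ∧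
          LinearIndependent ℝ (fun i : t => v (i : ι)) := by
      intro c hc0 j₀ hj₀s hj₀pos
      set pos : Finset ι := s.filter (fun i => 0 < c i) with hpos
      have hne : pos.Nonempty := ⟨j₀, Finset.mem_filter.mpr ⟨hj₀s, hj₀pos⟩⟩
      obtain ⟨j, hjpos, hjmin⟩ := Finset.exists_mem_eq_inf' hne (fun i => l i / c i)
      have hjs : j ∈ s := (Finset.mem_filter.mp hjpos).1
      have hcj : 0 < c j := (Finset.mem_filter.mp hjpos).2
      set tm : ℝ := l j / c j with htm
      have htm0 : 0 ≤ tm := div_nonneg (hl j hjs) hcj.le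
      set l' : ι → ℝ := fun i => l i - tm * c i with hl'
      have hl'j : l' j = 0 := by
        simp only [hl', htm]
        field_simp
        simp
      have hl'nonneg : ∀ i ∈ s.erase j, 0 ≤ l' i := by
        intro i hi
        have his : i ∈ s := Finset.mem_of_mem_erase hi
        by_cases hci : 0 < c i
        · have hile : tm ≤ l i / c i := by
            rw [← hjmin]
            exact Finset.inf'_le _ (Finset.mem_filter.mpr ⟨his, hci⟩)
          simp only [hl']
          have h2 : tm * c i ≤ l i := by
            rw [← le_div_iff₀ hci]
            exact hile
          linarith
        · push_neg at hci
          simp only [hl']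
          have : tm * c i ≤ 0 := mul_nonpos_of_nonneg_of_nonpos htm0 hci
          have := hl i his
          linarith
      have hsum' : ∑ i ∈ s.erase j, l' i • v i = ∑ i ∈ s, l i • v i := by
        rw [Finset.sum_erase s (by rw [hl'j, zero_smul])]
        have : ∑ i ∈ s, l' i • v i
            = ∑ i ∈ s, l i • v i - tm • ∑ i ∈ s, c i • v i := by
          rw [Finset.smul_sum, ← Finset.sum_sub_distrib]
          refine Finset.sum_congr rfl fun i _ => ?_
          simp [hl', sub_smul, smul_smul]
        rw [this, hc0, smul_zero, sub_zero]
      obtain ⟨t, hts, m, hm, hmsum, hli⟩ :=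
        ih (s.erase j) (Finset.erase_ssubset hjs) l' hl'nonneg
      exact ⟨t, hts.trans (Finset.erase_subset _ _), m, hm, by rw [hmsum, hsum'], hli⟩
    -- turn g into a total function with a positive value somewhere
    set d : ι → ℝ := fun i => if h : i ∈ s then g ⟨i, h⟩ else 0 with hd
    have hdsum : ∑ i ∈ s, d i • v i = 0 := by
      rw [← hgsum, ← Finset.sum_attach s (fun i => d i • v i)]
      refine Finset.sum_congr rfl fun i _ => ?_
      simp [hd, i.2]
    have hdi₀ : d (i₀ : ι) ≠ 0 := by
      simp only [hd, dif_pos i₀.2, Subtype.coe_eta]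
      exact hgi₀
    rcases hdi₀.lt_or_gt with hneg | hpos
    · have hnegsum : ∑ i ∈ s, (-d) i • v i = 0 := by
        rw [← neg_eq_zero, ← Finset.sum_neg_distrib]
        rw [← hdsum]
        refine Finset.sum_congr rfl fun i _ => ?_
        simp
      exact key (-d) hnegsum (i₀ : ι) i₀.2 (by simpa using hneg)
    · exact key d hdsum (i₀ : ι) i₀.2 hpos

lemma zero_sums_eq_zero {R : ℕ} (hR : 1 ≤ R) (M : Matrix (Fin R) (Fin R) ℝ)
    (h1 : ∀ i, ∑ j, M i j = 0) (h2 : ∀ j, ∑ i, M i j = 0)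
    (h3 : ∀ i j : Fin R, (i : ℕ) < R - 1 → (j : ℕ) < R - 1 → M i j = 0) : M = 0 := by
  set last : Fin R := ⟨R - 1, by omega⟩ with hlast
  have hval : ∀ i : Fin R, i ≠ last → (i : ℕ) < R - 1 := by
    intro i hi
    have h1 : (i : ℕ) ≠ R - 1 := fun h => hi (Fin.ext h)
    have h2 := i.2
    omega
  have step1 : ∀ i : Fin R, (i : ℕ) < R - 1 → M i last = 0 := by
    intro i hi
    have := h1 i
    rwa [Finset.sum_eq_single last (fun j _ hj => h3 i j hi (hval j hj)) (by simp)] at this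
  have step2 : ∀ j : Fin R, (j : ℕ) < R - 1 → M last j = 0 := by
    intro j hj
    have := h2 j
    rwa [Finset.sum_eq_single last (fun i _ hi => h3 i j (hval i hi) hj) (by simp)] at this
  have step3 : M last last = 0 := by
    have := h1 last
    rwa [Finset.sum_eq_single last (fun j _ hj => step2 j (hval j hj)) (by simp)] at this
  ext i j
  by_cases hi : (i : ℕ) < R - 1 <;> by_cases hj : (j : ℕ) < R - 1
  · simpa using h3 i j hi hj
  · have : j = last := Fin.ext (show (j : ℕ) = R - 1 by have := j.2; omega)
    subst this; simpa using step1 i hi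
  · have : i = last := Fin.ext (show (i : ℕ) = R - 1 by have := i.2; omega)
    subst this; simpa using step2 j hj
  · have hi' : i = last := Fin.ext (show (i : ℕ) = R - 1 by have := i.2; omega)
    have hj' : j = last := Fin.ext (show (j : ℕ) = R - 1 by have := j.2; omega)
    subst hi'; subst hj'; simpa using step3

/-- The restriction map to the top-left (R-1)×(R-1) block, as a linear map. -/
def truncMap (R : ℕ) :
    Matrix (Fin R) (Fin R) ℝ →ₗ[ℝ] Matrix (Fin (R - 1)) (Fin (R - 1)) ℝ where
  toFun M := Matrix.of fun i j => M (Fin.castLE (Nat.sub_le R 1) i) (Fin.castLE (Nat.sub_le R 1) j)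
  map_add' _ _ := rfl
  map_smul' _ _ := rfl

lemma permMatrix_apply {R : ℕ} (σ : Equiv.Perm (Fin R)) (i j : Fin R) :
    σ.permMatrix ℝ i j = if σ i = j then 1 else 0 := by
  simp [Equiv.Perm.permMatrix, PEquiv.toMatrix_apply, Equiv.toPEquiv_apply, Option.mem_def,
    eq_comm]

lemma isPermutationMatrix_permMatrix {R : ℕ} (σ : Equiv.Perm (Fin R)) :
    IsPermutationMatrix (σ.permMatrix ℝ) := by
  refine ⟨fun i j => ?_, fun i => ?_, fun j => ?_⟩
  · rw [permMatrix_apply]; split <;> simp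
  · exact sum_row_of_mem_doublyStochastic permMatrix_mem_doublyStochastic i
  · exact sum_col_of_mem_doublyStochastic permMatrix_mem_doublyStochastic j

lemma one_sub_perm_row_sum {R : ℕ} (σ : Equiv.Perm (Fin R)) (i : Fin R) :
    ∑ j, ((1 : Matrix (Fin R) (Fin R) ℝ) - σ.permMatrix ℝ) i j = 0 := by
  have h1 : ∑ j, (1 : Matrix (Fin R) (Fin R) ℝ) i j = 1 := by
    simp [Matrix.one_apply]
  have h2 := (isPermutationMatrix_permMatrix σ).2.1 i
  simp only [Matrix.sub_apply, Finset.sum_sub_distrib, h1, h2, sub_self]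

lemma one_sub_perm_col_sum {R : ℕ} (σ : Equiv.Perm (Fin R)) (j : Fin R) :
    ∑ i, ((1 : Matrix (Fin R) (Fin R) ℝ) - σ.permMatrix ℝ) i j = 0 := by
  have h1 : ∑ i, (1 : Matrix (Fin R) (Fin R) ℝ) i j = 1 := by
    simp [Matrix.one_apply]
  have h2 := (isPermutationMatrix_permMatrix σ).2.2 j
  simp only [Matrix.sub_apply, Finset.sum_sub_distrib, h1, h2, sub_self]

/-- The submodule of matrices all of whose row and column sums vanish. -/
def zeroSumSubmodule (R : ℕ) : Submodule ℝ (Matrix (Fin R) (Fin R) ℝ) where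
  carrier := {M | (∀ i, ∑ j, M i j = 0) ∧ (∀ j, ∑ i, M i j = 0)}
  add_mem' := by
    rintro a b ⟨ha1, ha2⟩ ⟨hb1, hb2⟩
    constructor <;> intro i <;>
      simp [Matrix.add_apply, Finset.sum_add_distrib, ha1, ha2, hb1, hb2]
  zero_mem' := by constructor <;> intro i <;> simp
  smul_mem' := by
    rintro c a ⟨h1, h2⟩
    constructor <;> intro i <;>
      simp [Matrix.smul_apply, ← Finset.mul_sum, h1, h2]

lemma card_bound {R : ℕ} (t : Finset (Equiv.Perm (Fin R)))
    (hli : LinearIndependent ℝ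
      (fun σ : t => (1 : Matrix (Fin R) (Fin R) ℝ) - (σ : Equiv.Perm (Fin R)).permMatrix ℝ)) :
    t.card ≤ R ^ 2 - 2 * R + 1 := by
  rcases Nat.eq_zero_or_pos R with hR | hR
  · subst hR
    rcases t.eq_empty_or_nonempty with rfl | ⟨σ, hσ⟩
    · simp
    · exfalso
      exact hli.ne_zero ⟨σ, hσ⟩ (Subsingleton.elim _ _)
  -- R ≥ 1
  have hdisj : Disjoint (Submodule.span ℝ (Set.range
      (fun σ : t => (1 : Matrix (Fin R) (Fin R) ℝ) - (σ : Equiv.Perm (Fin R)).permMatrix ℝ)))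
      (LinearMap.ker (truncMap R)) := by
    rw [Submodule.disjoint_def]
    intro M hMspan hMker
    have hMZ : M ∈ zeroSumSubmodule R := by
      have hsub : Set.range (fun σ : t =>
          (1 : Matrix (Fin R) (Fin R) ℝ) - (σ : Equiv.Perm (Fin R)).permMatrix ℝ)
          ⊆ (zeroSumSubmodule R : Set (Matrix (Fin R) (Fin R) ℝ)) := by
        rintro _ ⟨σ, rfl⟩
        exact ⟨one_sub_perm_row_sum _, one_sub_perm_col_sum _⟩
      exact Submodule.span_le.mpr hsub hMspan
    have hker := LinearMap.mem_ker.mp hMker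
    refine zero_sums_eq_zero hR M hMZ.1 hMZ.2 ?_
    intro i j hi hj
    have := congrFun (congrFun hker ⟨(i : ℕ), hi⟩) ⟨(j : ℕ), hj⟩
    simpa [truncMap, Fin.castLE, Fin.ext_iff] using this
  have hli2 := hli.map hdisj
  have hcard := hli2.fintype_card_le_finrank
  rw [Fintype.card_coe] at hcard
  have hfr : Module.finrank ℝ (Matrix (Fin (R - 1)) (Fin (R - 1)) ℝ) = (R - 1) * (R - 1) := by
    rw [Module.finrank_matrix]
    simp
  rw [hfr] at hcard
  refine hcard.trans ?_
  obtain ⟨n, rfl⟩ := Nat.exists_eq_add_of_le hR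
  have h1 : (1 + n) ^ 2 = n * n + (2 * n + 1) := by ring
  rw [h1]
  simp only [Nat.add_sub_cancel_left]
  omega

theorem dhd_zero_excess_conic_decomposition_short
    {R : ℕ} (H : Matrix (Fin R) (Fin R) ℝ)
    (hH : IsDoublyHyperdominantZeroExcess H) :
    ∃ (k : ℕ) (lam : Fin k → ℝ) (P : Fin k → Matrix (Fin R) (Fin R) ℝ),
      k ≤ R ^ 2 - 2 * R + 1 ∧
      (∀ i, 0 ≤ lam i) ∧ (∀ i, IsPermutationMatrix (P i)) ∧
      H = ∑ i, lam i • ((1 : Matrix (Fin R) (Fin R) ℝ) - P i) := by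
  obtain ⟨⟨hoff, -, -⟩, hrow, hcol⟩ := hH
  set s : ℝ := 1 + ∑ i, |H i i| with hs_def
  have hs : 0 < s := by
    have : 0 ≤ ∑ i, |H i i| := Finset.sum_nonneg fun i _ => abs_nonneg _
    linarith
  set B : Matrix (Fin R) (Fin R) ℝ := s • (1 : Matrix (Fin R) (Fin R) ℝ) - H with hB_def
  have hone_row : ∀ i : Fin R, ∑ j, (1 : Matrix (Fin R) (Fin R) ℝ) i j = 1 := by
    intro i; simp [Matrix.one_apply]
  have hone_col : ∀ j : Fin R, ∑ i, (1 : Matrix (Fin R) (Fin R) ℝ) i j = 1 := by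
    intro j; simp [Matrix.one_apply]
  have hBnonneg : ∀ i j, 0 ≤ B i j := by
    intro i j
    by_cases hij : i = j
    · subst hij
      have h1 : H i i ≤ ∑ k, |H k k| := by
        calc H i i ≤ |H i i| := le_abs_self _
        _ ≤ ∑ k, |H k k| := Finset.single_le_sum (f := fun k => |H k k|) (fun k _ => abs_nonneg _) (Finset.mem_univ i)
      simp only [hB_def, Matrix.sub_apply, Matrix.smul_apply, Matrix.one_apply_eq, smul_eq_mul,
        mul_one]
      linarith
    · simp only [hB_def, Matrix.sub_apply, Matrix.smul_apply, Matrix.one_apply_ne hij,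
        smul_eq_mul, mul_zero]
      have := hoff i j hij
      linarith
  have hBrow : ∀ i, ∑ j, B i j = s := by
    intro i
    simp only [hB_def, Matrix.sub_apply, Matrix.smul_apply, Finset.sum_sub_distrib, hrow i,
      smul_eq_mul, ← Finset.mul_sum, hone_row i, mul_one, sub_zero]
  have hBcol : ∀ j, ∑ i, B i j = s := by
    intro j
    simp only [hB_def, Matrix.sub_apply, Matrix.smul_apply, Finset.sum_sub_distrib, hcol j,
      smul_eq_mul, ← Finset.mul_sum, hone_col j, mul_one, sub_zero]
  have hDS : s⁻¹ • B ∈ doublyStochastic ℝ (Fin R) := by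
    rw [mem_doublyStochastic_iff_sum]
    refine ⟨fun i j => mul_nonneg (inv_nonneg.mpr hs.le) (hBnonneg i j), fun i => ?_, fun j => ?_⟩
    · simp only [Matrix.smul_apply, smul_eq_mul, ← Finset.mul_sum, hBrow i]
      exact inv_mul_cancel₀ hs.ne'
    · simp only [Matrix.smul_apply, smul_eq_mul, ← Finset.mul_sum, hBcol j]
      exact inv_mul_cancel₀ hs.ne'
  obtain ⟨w, hw0, hw1, hw2⟩ := exists_eq_sum_perm_of_mem_doublyStochastic hDS
  -- B = ∑ σ, (s * w σ) • permMatrix σ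
  have hB_eq : ∑ σ : Equiv.Perm (Fin R), (s * w σ) • σ.permMatrix ℝ = B := by
    have := congrArg (fun M => s • M) hw2
    simp only [Finset.smul_sum, smul_smul, smul_inv_smul₀ hs.ne'] at this
    simpa [smul_eq_mul] using this
  have hH_eq : H = ∑ σ : Equiv.Perm (Fin R),
      (s * w σ) • ((1 : Matrix (Fin R) (Fin R) ℝ) - σ.permMatrix ℝ) := by
    have hsum1 : ∑ σ : Equiv.Perm (Fin R), (s * w σ) • (1 : Matrix (Fin R) (Fin R) ℝ)
        = s • (1 : Matrix (Fin R) (Fin R) ℝ) := by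
      rw [← Finset.sum_smul, ← Finset.mul_sum, hw1, mul_one]
    calc H = s • (1 : Matrix (Fin R) (Fin R) ℝ) - B := by rw [hB_def]; abel
    _ = ∑ σ : Equiv.Perm (Fin R), (s * w σ) • ((1 : Matrix (Fin R) (Fin R) ℝ) - σ.permMatrix ℝ) := by
        rw [← hsum1, ← hB_eq, ← Finset.sum_sub_distrib]
        refine Finset.sum_congr rfl fun σ _ => ?_
        rw [smul_sub]
  -- apply conic Carathéodory
  obtain ⟨t, -, m, hm0, hmsum, hli⟩ :=
    cone_caratheodory (fun σ : Equiv.Perm (Fin R) => (1 : Matrix (Fin R) (Fin R) ℝ) - σ.permMatrix ℝ)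
      Finset.univ (fun σ => s * w σ)
      (fun σ _ => mul_nonneg hs.le (hw0 σ))
  have hcard := card_bound t hli
  refine ⟨t.card, fun i => m ((t.equivFin.symm i : t) : Equiv.Perm (Fin R)),
    fun i => ((t.equivFin.symm i : t) : Equiv.Perm (Fin R)).permMatrix ℝ, hcard,
    fun i => hm0 _ (t.equivFin.symm i : t).2,
    fun i => isPermutationMatrix_permMatrix _, ?_⟩
  rw [hH_eq, ← hmsum,
    ← Finset.sum_attach t (fun σ => m σ • ((1 : Matrix (Fin R) (Fin R) ℝ) - σ.permMatrix ℝ)),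
    ← Finset.univ_eq_attach]
  exact (Equiv.sum_comp t.equivFin.symm
    (fun x : t => m (x : Equiv.Perm (Fin R)) •
      ((1 : Matrix (Fin R) (Fin R) ℝ) - ((x : Equiv.Perm (Fin R)).permMatrix ℝ)))).symm
end

section
/- Let 0 < m < L < ∞, let f : ℝ^d → ℝ be m-strongly convex and differentiable with L-Lipschitz gradient, and suppose ∇f(0) = 0. Let y_0, …, y_{N−1} ∈ ℝ^d, set u_i := ∇f(y_i), and let Y, U ∈ ℝ^{Nd} be the stacked vectors Y := (y_0ᵀ, …, y_{N−1}ᵀ)ᵀ and U := (u_0ᵀ, …, u_{N−1}ᵀ)ᵀ. Then for every N×N doubly hyperdominant matrix H, (L Y − U)ᵀ (H ⊗ I_d) (U − m Y) ≥ 0. -/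
open Matrix Kronecker

/-- `f` is `m`-strongly convex: `y ↦ f y - m/2 ‖y‖²` is convex. -/
def StronglyConvexFun {d : ℕ} (m : ℝ) (f : EuclideanSpace ℝ (Fin d) → ℝ) : Prop :=
  ConvexOn ℝ Set.univ (fun y => f y - m / 2 * ‖y‖ ^ 2)

open InnerProductSpace

section Aux

variable {E : Type*} [NormedAddCommGroup E] [InnerProductSpace ℝ E] [CompleteSpace E]

local notation "⟪" x ", " y "⟫" => @inner ℝ _ _ x y

/-- First-order condition of convexity. -/
lemma convex_grad_ineq (g : E → ℝ) (hg : ConvexOn ℝ Set.univ g) (z w : E) (G : E)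
    (hG : HasGradientAt g G z) : g z + ⟪G, w - z⟫ ≤ g w := by
  rcases eq_or_ne w z with rfl | hwz
  · simp
  · set A : ℝ →ᵃ[ℝ] E := AffineMap.lineMap z w with hA
    have hAt : ∀ t : ℝ, A t = z + t • (w - z) := by
      intro t; simp [hA, AffineMap.lineMap_apply]; module
    have hconv : ConvexOn ℝ Set.univ (g ∘ A) := by
      have := hg.comp_affineMap A
      simpa using this
    have hd : HasDerivAt (g ∘ A) ⟪G, w - z⟫ 0 := by
      have hc : HasDerivAt (fun t : ℝ => A t) (w - z) 0 := by
        simp only [hAt]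
        simpa using ((hasDerivAt_id (0:ℝ)).smul_const (w - z)).const_add z
      have hz : z = A 0 := by simp [hAt]
      have := HasFDerivAt.comp_hasDerivAt (x := (0:ℝ)) (hz ▸ hG.hasFDerivAt) hc
      simpa [toDual_apply_apply] using this
    have hs := hconv.le_slope_of_hasDerivAt (Set.mem_univ (0:ℝ)) (Set.mem_univ (1:ℝ))
      one_pos hd
    have h0 : (g ∘ A) 0 = g z := by simp [hAt]
    have h1 : (g ∘ A) 1 = g w := by simp [hAt]
    rw [slope_def_field] at hs
    rw [h0, h1] at hs
    simp at hs
    linarith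

/-- Descent lemma for a function with Lipschitz gradient. -/
lemma descent_lemma (f : E → ℝ) (hdiff : Differentiable ℝ f) (Lc : ℝ) (hL : 0 ≤ Lc)
    (hLip : ∀ x y : E, ‖gradient f y - gradient f x‖ ≤ Lc * ‖y - x‖) (a b : E) :
    f b ≤ f a + ⟪gradient f a, b - a⟫ + Lc / 2 * ‖b - a‖ ^ 2 := by
  set c : ℝ → E := fun t => a + t • (b - a) with hc
  have hcder : ∀ t : ℝ, HasDerivAt c (b - a) t := fun t => by
    simpa [hc] using ((hasDerivAt_id t).smul_const (b - a)).const_add a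
  set D : ℝ → ℝ := fun t => ⟪gradient f (c t), b - a⟫ with hD
  have hFder : ∀ t : ℝ, HasDerivAt (fun t => f (c t)) (D t) t := by
    intro t
    have h1 := ((hdiff (c t)).hasGradientAt.hasFDerivAt).comp_hasDerivAt t (hcder t)
    simpa [toDual_apply_apply, hD, Function.comp_def] using h1
  have hgradLip : LipschitzWith (Real.toNNReal Lc) (gradient f) := by
    apply LipschitzWith.of_dist_le_mul
    intro x y
    rw [dist_eq_norm, dist_eq_norm]
    calc ‖gradient f x - gradient f y‖ ≤ Lc * ‖x - y‖ := hLip y x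
      _ = (Real.toNNReal Lc : ℝ) * ‖x - y‖ := by rw [Real.coe_toNNReal Lc hL]
  have hccont : Continuous c := by fun_prop
  have hDcont : Continuous D := by
    apply Continuous.inner (hgradLip.continuous.comp hccont) continuous_const
  have hFTC : f (c 1) - f (c 0) = ∫ t in (0:ℝ)..1, D t := by
    rw [intervalIntegral.integral_eq_sub_of_hasDerivAt (fun t _ => hFder t)
      (hDcont.intervalIntegrable 0 1)]
  have hbound : ∫ t in (0:ℝ)..1, D t ≤ ∫ t in (0:ℝ)..1, (D 0 + Lc * ‖b - a‖ ^ 2 * t) := by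
    apply intervalIntegral.integral_mono_on zero_le_one (hDcont.intervalIntegrable 0 1)
    · exact (Continuous.intervalIntegrable (by fun_prop) 0 1)
    · intro t ht
      have h1 : D t - D 0 = ⟪gradient f (c t) - gradient f a, b - a⟫ := by
        simp [hD, hc, inner_sub_left]
      have h2 : ⟪gradient f (c t) - gradient f a, b - a⟫ ≤ Lc * t * ‖b - a‖ ^ 2 := by
        calc ⟪gradient f (c t) - gradient f a, b - a⟫
            ≤ ‖gradient f (c t) - gradient f a‖ * ‖b - a‖ := real_inner_le_norm _ _
          _ ≤ (Lc * ‖c t - a‖) * ‖b - a‖ := by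
              apply mul_le_mul_of_nonneg_right (hLip a (c t)) (norm_nonneg _)
          _ = Lc * t * ‖b - a‖ ^ 2 := by
              have : ‖c t - a‖ = t * ‖b - a‖ := by
                simp [hc, norm_smul, abs_of_nonneg ht.1]
              rw [this]; ring
      linarith
  have hint : ∫ t in (0:ℝ)..1, (D 0 + Lc * ‖b - a‖ ^ 2 * t) = D 0 + Lc / 2 * ‖b - a‖ ^ 2 := by
    rw [intervalIntegral.integral_add (Continuous.intervalIntegrable (by fun_prop) 0 1)
      (Continuous.intervalIntegrable (by fun_prop) 0 1),
      intervalIntegral.integral_const, intervalIntegral.integral_const_mul]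
    rw [integral_id]
    norm_num
    ring
  have hc0 : c 0 = a := by simp [hc]
  have hc1 : c 1 = b := by simp [hc]
  have hD0 : D 0 = ⟪gradient f a, b - a⟫ := by simp [hD, hc]
  rw [hc0, hc1] at hFTC
  rw [hD0] at hbound hint
  linarith [hbound, hint, hFTC]

end Aux

set_option maxHeartbeats 1000000

theorem dhd_quadratic_constraint_nonneg
    {d N : ℕ} (m L : ℝ) (hm : 0 < m) (hmL : m < L)
    (f : EuclideanSpace ℝ (Fin d) → ℝ)
    (hconv : StronglyConvexFun m f) (hdiff : Differentiable ℝ f)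
    (hLip : ∀ y₁ y₂, ‖gradient f y₂ - gradient f y₁‖ ≤ L * ‖y₂ - y₁‖)
    (hopt : gradient f 0 = 0)
    (y u : Fin N → EuclideanSpace ℝ (Fin d)) (hu : ∀ i, u i = gradient f (y i))
    (Y U : Fin N × Fin d → ℝ)
    (hY : ∀ p, Y p = y p.1 p.2) (hU : ∀ p, U p = u p.1 p.2)
    (H : Matrix (Fin N) (Fin N) ℝ) (hH : IsDoublyHyperdominant H) :
    0 ≤ (L • Y - U) ⬝ᵥ ((H ⊗ₖ (1 : Matrix (Fin d) (Fin d) ℝ)).mulVec (U - m • Y)) := by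
  set ℓ : ℝ := L - m with hℓdef
  have hl : 0 < ℓ := by simp [hℓdef]; linarith
  set g : EuclideanSpace ℝ (Fin d) → ℝ := fun x => f x - m / 2 * ‖x‖ ^ 2 with hg
  set φ : EuclideanSpace ℝ (Fin d) → EuclideanSpace ℝ (Fin d) := fun x => gradient f x - m • x with hφdef
  have hconv' : ConvexOn ℝ Set.univ g := hconv
  -- gradient of g
  have hφ : ∀ x : EuclideanSpace ℝ (Fin d), HasGradientAt g (φ x) x := by
    intro x
    have hf' : HasFDerivAt f (toDual ℝ (EuclideanSpace ℝ (Fin d)) (gradient f x)) x := (hdiff x).hasGradientAt.hasFDerivAt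
    have hsq : HasFDerivAt (fun y : EuclideanSpace ℝ (Fin d) => m / 2 * ‖y‖ ^ 2) ((m / 2) • (2 • innerSL ℝ x)) x :=
      ((hasStrictFDerivAt_norm_sq x).hasFDerivAt).const_mul (m / 2)
    have h := hf'.sub hsq
    have heq : toDual ℝ (EuclideanSpace ℝ (Fin d)) (gradient f x) - (m / 2) • (2 • innerSL ℝ x)
        = toDual ℝ (EuclideanSpace ℝ (Fin d)) (gradient f x - m • x) := by
      ext v
      simp [toDual_apply_apply, inner_sub_left, real_inner_smul_left]
      ring
    rw [heq] at h
    have h2 := h.hasGradientAt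
    rw [LinearIsometryEquiv.symm_apply_apply] at h2
    exact h2
  -- descent lemma for g with constant ℓ
  have descg : ∀ a b : EuclideanSpace ℝ (Fin d), g b ≤ g a + ⟪φ a, b - a⟫_ℝ + ℓ / 2 * ‖b - a‖ ^ 2 := by
    intro a b
    have hf := descent_lemma f hdiff L (by linarith) (fun x y => hLip x y) a b
    have hab : a + (b - a) = b := by abel
    have hnorm : ‖b‖ ^ 2 = ‖a‖ ^ 2 + 2 * ⟪a, b - a⟫_ℝ + ‖b - a‖ ^ 2 := by
      have := norm_add_sq_real a (b - a)
      rwa [hab] at this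
    have hphi : ⟪φ a, b - a⟫_ℝ = ⟪gradient f a, b - a⟫_ℝ - m * ⟪a, b - a⟫_ℝ := by
      show ⟪gradient f a - m • a, b - a⟫_ℝ = ⟪gradient f a, b - a⟫_ℝ - m * ⟪a, b - a⟫_ℝ
      rw [inner_sub_left, real_inner_smul_left]
    show f b - m / 2 * ‖b‖ ^ 2 ≤ (f a - m / 2 * ‖a‖ ^ 2) + ⟪φ a, b - a⟫_ℝ + ℓ / 2 * ‖b - a‖ ^ 2
    rw [hphi, hℓdef, hnorm]
    generalize ⟪gradient f a, b - a⟫_ℝ = G at hf ⊢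
    generalize ⟪a, b - a⟫_ℝ = I
    nlinarith [hf]
  -- interpolation inequality for g
  have interp : ∀ x z : EuclideanSpace ℝ (Fin d),
      g z + ⟪φ z, x - z⟫_ℝ + (2 * ℓ)⁻¹ * ‖φ x - φ z‖ ^ 2 ≤ g x := by
    intro x z
    set Δ : EuclideanSpace ℝ (Fin d) := φ x - φ z with hΔ
    set w : EuclideanSpace ℝ (Fin d) := x - ℓ⁻¹ • Δ with hw
    have h1 := convex_grad_ineq g hconv' z w (φ z) (hφ z)
    have h2 := descg x w
    have e1 : w - x = -(ℓ⁻¹ • Δ) := by rw [hw]; abel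
    have e2 : ‖w - x‖ ^ 2 = ℓ⁻¹ * ℓ⁻¹ * ‖Δ‖ ^ 2 := by
      rw [e1, norm_neg, norm_smul]
      rw [Real.norm_eq_abs, abs_of_nonneg (inv_nonneg.mpr hl.le)]
      ring
    have e3 : ⟪φ x, w - x⟫_ℝ = -(ℓ⁻¹ * ⟪φ x, Δ⟫_ℝ) := by
      rw [e1, inner_neg_right, real_inner_smul_right]
    have e4 : ⟪φ z, w - z⟫_ℝ = ⟪φ z, x - z⟫_ℝ - ℓ⁻¹ * ⟪φ z, Δ⟫_ℝ := by
      have hwz : w - z = (x - z) - ℓ⁻¹ • Δ := by rw [hw]; abel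
      rw [hwz, inner_sub_right, real_inner_smul_right]
    have e5 : ℓ⁻¹ * ⟪φ x, Δ⟫_ℝ - ℓ⁻¹ * ⟪φ z, Δ⟫_ℝ = ℓ⁻¹ * ‖Δ‖ ^ 2 := by
      rw [← mul_sub, ← inner_sub_left]
      rw [real_inner_self_eq_norm_sq]
    have e7 : ℓ / 2 * (ℓ⁻¹ * ℓ⁻¹ * ‖Δ‖ ^ 2) + (2 * ℓ)⁻¹ * ‖Δ‖ ^ 2 = ℓ⁻¹ * ‖Δ‖ ^ 2 := by
      field_simp
      ring
    rw [e4] at h1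
    rw [e2, e3] at h2
    linarith
  -- the vectors v i = φ (y i)
  set v : Fin N → EuclideanSpace ℝ (Fin d) := fun i => u i - m • y i with hv
  have hvφ : ∀ i, v i = φ (y i) := by intro i; simp [hv, hφdef, hu i]
  have hφ0 : φ 0 = 0 := by simp [hφdef, hopt]
  -- scalar quantities
  set α : Fin N → ℝ := fun i => ℓ * (g (y i) - g 0) - ‖v i‖ ^ 2 / 2 with hα
  set β : Fin N → ℝ := fun i => ℓ * (⟪v i, y i⟫_ℝ - g (y i) + g 0) - ‖v i‖ ^ 2 / 2 with hβ
  set b : Fin N → Fin N → ℝ := fun i j => ℓ * ⟪y i, v j⟫_ℝ - ⟪v i, v j⟫_ℝ with hb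
  have hα0 : ∀ i, 0 ≤ α i := by
    intro i
    have h1 := interp (y i) 0
    rw [hφ0] at h1
    simp only [inner_zero_left, sub_zero, zero_add, add_zero] at h1
    rw [← hvφ i] at h1
    -- h1 : g 0 + (2 * ℓ)⁻¹ * ‖v i‖ ^ 2 ≤ g (y i)
    have h4 := mul_le_mul_of_nonneg_left h1 hl.le
    have key : ℓ * ((2 * ℓ)⁻¹ * ‖v i‖ ^ 2) = ‖v i‖ ^ 2 / 2 := by
      field_simp
    rw [mul_add, key] at h4
    show 0 ≤ ℓ * (g (y i) - g 0) - ‖v i‖ ^ 2 / 2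
    have : ℓ * (g (y i) - g 0) = ℓ * g (y i) - ℓ * g 0 := by ring
    rw [this]
    linarith [h4]
  have hβ0 : ∀ i, 0 ≤ β i := by
    intro i
    have h1 := interp 0 (y i)
    rw [← hvφ i, hφ0] at h1
    simp only [zero_sub, sub_zero, inner_neg_right, norm_neg] at h1
    -- h1 : g (y i) + -⟪v i, y i⟫ + (2 * ℓ)⁻¹ * ‖v i‖ ^ 2 ≤ g 0
    have h4 := mul_le_mul_of_nonneg_left h1 hl.le
    have key : ℓ * ((2 * ℓ)⁻¹ * ‖v i‖ ^ 2) = ‖v i‖ ^ 2 / 2 := by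
      field_simp
    rw [mul_add, key] at h4
    show 0 ≤ ℓ * (⟪v i, y i⟫_ℝ - g (y i) + g 0) - ‖v i‖ ^ 2 / 2
    have he : ℓ * (g (y i) + -⟪v i, y i⟫_ℝ) = ℓ * g (y i) - ℓ * ⟪v i, y i⟫_ℝ := by ring
    have he2 : ℓ * (⟪v i, y i⟫_ℝ - g (y i) + g 0)
        = ℓ * ⟪v i, y i⟫_ℝ - ℓ * g (y i) + ℓ * g 0 := by ring
    rw [he] at h4
    rw [he2]
    linarith [h4]
  have hble : ∀ i j, b i j ≤ α i + β j := by
    intro i j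
    have := interp (y i) (y j)
    rw [← hvφ i, ← hvφ j] at this
    have hsq : ‖v i - v j‖ ^ 2 = ‖v i‖ ^ 2 - 2 * ⟪v i, v j⟫_ℝ + ‖v j‖ ^ 2 := by
      rw [norm_sub_sq_real]; try ring
    rw [hsq] at this
    have hinner : ⟪v j, y i - y j⟫_ℝ = ⟪y i, v j⟫_ℝ - ⟪v j, y j⟫_ℝ := by
      rw [inner_sub_right, real_inner_comm]
    rw [hinner] at this
    have h4 := mul_le_mul_of_nonneg_left this hl.le
    have key : ℓ * ((2 * ℓ)⁻¹ * (‖v i‖ ^ 2 - 2 * ⟪v i, v j⟫_ℝ + ‖v j‖ ^ 2))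
        = (‖v i‖ ^ 2 - 2 * ⟪v i, v j⟫_ℝ + ‖v j‖ ^ 2) / 2 := by
      field_simp
    rw [mul_add, key] at h4
    have he : ℓ * (g (y j) + (⟪y i, v j⟫_ℝ - ⟪v j, y j⟫_ℝ))
        = ℓ * g (y j) + ℓ * ⟪y i, v j⟫_ℝ - ℓ * ⟪v j, y j⟫_ℝ := by ring
    rw [he] at h4
    show ℓ * ⟪y i, v j⟫_ℝ - ⟪v i, v j⟫_ℝ
        ≤ (ℓ * (g (y i) - g 0) - ‖v i‖ ^ 2 / 2)
          + (ℓ * (⟪v j, y j⟫_ℝ - g (y j) + g 0) - ‖v j‖ ^ 2 / 2)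
    have he2 : (ℓ * (g (y i) - g 0) - ‖v i‖ ^ 2 / 2)
          + (ℓ * (⟪v j, y j⟫_ℝ - g (y j) + g 0) - ‖v j‖ ^ 2 / 2)
        = ℓ * g (y i) + ℓ * ⟪v j, y j⟫_ℝ - ℓ * g (y j) - ‖v i‖ ^ 2 / 2
          - ‖v j‖ ^ 2 / 2 := by ring
    rw [he2]
    linarith [h4]
  have hbdiag : ∀ i, b i i = α i + β i := by
    intro i
    show ℓ * ⟪y i, v i⟫_ℝ - ⟪v i, v i⟫_ℝ
        = (ℓ * (g (y i) - g 0) - ‖v i‖ ^ 2 / 2)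
          + (ℓ * (⟪v i, y i⟫_ℝ - g (y i) + g 0) - ‖v i‖ ^ 2 / 2)
    rw [real_inner_self_eq_norm_sq, real_inner_comm (v i) (y i)]
    ring
  -- matrix identity
  have hdot : (L • Y - U) ⬝ᵥ ((H ⊗ₖ (1 : Matrix (Fin d) (Fin d) ℝ)).mulVec (U - m • Y))
      = ∑ i, ∑ j, H i j * ⟪(L : ℝ) • y i - u i, u j - m • y j⟫_ℝ := by
    have hmv : ∀ p : Fin N × Fin d,
        (H ⊗ₖ (1 : Matrix (Fin d) (Fin d) ℝ)).mulVec (U - m • Y) p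
          = ∑ j, H p.1 j * (u j p.2 - m * y j p.2) := by
      intro p
      simp only [Matrix.mulVec, dotProduct, Fintype.sum_prod_type,
        Matrix.kroneckerMap_apply, Matrix.one_apply, Pi.sub_apply, Pi.smul_apply, smul_eq_mul,
        hY, hU, mul_ite, mul_one, mul_zero, ite_mul, zero_mul]
      refine Finset.sum_congr rfl fun j _ => ?_
      rw [Finset.sum_ite_eq Finset.univ p.2 (fun l => H p.1 j * (u j l - m * y j l))]
      simp [mul_sub]
    simp only [dotProduct, Fintype.sum_prod_type, hmv, Pi.sub_apply, Pi.smul_apply,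
      smul_eq_mul, hY, hU]
    simp only [PiLp.inner_apply, RCLike.inner_apply, conj_trivial, PiLp.sub_apply,
      PiLp.smul_apply, smul_eq_mul, Finset.mul_sum]
    refine Finset.sum_congr rfl fun i _ => ?_
    rw [Finset.sum_comm]
    refine Finset.sum_congr rfl fun j _ => ?_
    refine Finset.sum_congr rfl fun k _ => ?_
    ring
  -- inner products equal b i j
  have hinner_b : ∀ i j, ⟪(L : ℝ) • y i - u i, u j - m • y j⟫_ℝ = b i j := by
    intro i j
    have h1 : (L : ℝ) • y i - u i = ℓ • y i - v i := by
      rw [hv, hℓdef]; simp only []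
      rw [sub_smul]; abel
    have h2 : u j - m • y j = v j := rfl
    rw [h1, h2, hb, inner_sub_left, real_inner_smul_left]
  rw [hdot]
  simp only [hinner_b]
  -- final combinatorial argument
  have hterm : ∀ i j, H i j * (α i + β j) ≤ H i j * b i j := by
    intro i j
    rcases eq_or_ne i j with rfl | hne
    · rw [hbdiag i]
    · exact mul_le_mul_of_nonpos_left (hble i j) (hH.1 i j hne)
  have hsum1 : ∑ i, ∑ j, H i j * (α i + β j) ≤ ∑ i, ∑ j, H i j * b i j :=
    Finset.sum_le_sum fun i _ => Finset.sum_le_sum fun j _ => hterm i j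
  have hsum0 : 0 ≤ ∑ i, ∑ j, H i j * (α i + β j) := by
    have hsplit : ∑ i, ∑ j, H i j * (α i + β j)
        = (∑ i, (∑ j, H i j) * α i) + (∑ j, (∑ i, H i j) * β j) := by
      simp_rw [mul_add, Finset.sum_add_distrib]
      congr 1
      · refine Finset.sum_congr rfl fun i _ => ?_
        rw [Finset.sum_mul]
      · rw [Finset.sum_comm]
        refine Finset.sum_congr rfl fun j _ => ?_
        rw [Finset.sum_mul]
    rw [hsplit]
    have h1 : 0 ≤ ∑ i, (∑ j, H i j) * α i :=
      Finset.sum_nonneg fun i _ => mul_nonneg (hH.2.1 i) (hα0 i)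
    have h2 : 0 ≤ ∑ j, (∑ i, H i j) * β j :=
      Finset.sum_nonneg fun j _ => mul_nonneg (hH.2.2 j) (hβ0 j)
    linarith
  linarith
end
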